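/- If A is a 2×2 complex matrix with A†A ≤ I (i.e., I − A†A positive semidefinite), and Ā = √(I − A†A), then |det(A)| + |det(Ā)| ≤ 1. -/

import Mathlib

open Matrix ComplexOrder

namespace Matrix.PosSemidef

/-- The positive semidefinite square root of a positive semidefinite matrix
(Mathlib's former `Matrix.PosSemidef.sqrt`, restored with its old definition). -/
noncomputable def sqrt {n : Type*} [Fintype n] [DecidableEq n] {𝕜 : Type*} [RCLike 𝕜]
    {A : Matrix n n 𝕜} (hA : A.PosSemidef) : Matrix n n 𝕜 :=
  (hA.1.eigenvectorUnitary : Matrix n n 𝕜) *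
    diagonal (((↑) : ℝ → 𝕜) ∘ Real.sqrt ∘ hA.1.eigenvalues) *
  (star hA.1.eigenvectorUnitary : Matrix n n 𝕜)

end Matrix.PosSemidef

lemma my_sqrt_mul_self {n : Type*} [Fintype n] [DecidableEq n]
    {M : Matrix n n ℂ} (hM : M.PosSemidef) : hM.sqrt * hM.sqrt = M := by
  have hU : (star hM.1.eigenvectorUnitary : Matrix n n ℂ) * hM.1.eigenvectorUnitary = 1 :=
    (hM.1.eigenvectorUnitary.2).1
  have hD : diagonal ((RCLike.ofReal (K := ℂ)) ∘ Real.sqrt ∘ hM.1.eigenvalues) *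
      diagonal ((RCLike.ofReal (K := ℂ)) ∘ Real.sqrt ∘ hM.1.eigenvalues)
      = diagonal (RCLike.ofReal ∘ hM.1.eigenvalues) := by
    rw [diagonal_mul_diagonal]
    congr 1
    funext i
    simp only [Function.comp_apply]
    rw [← RCLike.ofReal_mul, Real.mul_self_sqrt (hM.eigenvalues_nonneg i)]
  unfold Matrix.PosSemidef.sqrt
  conv_rhs => rw [hM.1.spectral_theorem, Unitary.conjStarAlgAut_apply]
  rw [← hD]
  simp only [mul_assoc]
  rw [← mul_assoc (star _ : Matrix n n ℂ) _ _, hU, one_mul]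

lemma my_sqrt_det_nonneg {n : Type*} [Fintype n] [DecidableEq n]
    {M : Matrix n n ℂ} (hM : M.PosSemidef) : 0 ≤ hM.sqrt.det := by
  have hU : (star hM.1.eigenvectorUnitary : Matrix n n ℂ) * hM.1.eigenvectorUnitary = 1 :=
    (hM.1.eigenvectorUnitary.2).1
  have h1 := congrArg Matrix.det hU
  rw [det_mul, det_one] at h1
  unfold Matrix.PosSemidef.sqrt
  rw [det_mul, det_mul, det_diagonal]
  have : (∏ i, (((RCLike.ofReal (K := ℂ)) ∘ Real.sqrt ∘ hM.1.eigenvalues) i))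
      = ((∏ i, Real.sqrt (hM.1.eigenvalues i) : ℝ) : ℂ) := by
    exact (RCLike.ofReal_prod _ _).symm
  rw [this, mul_comm, ← mul_assoc, h1, one_mul, Complex.zero_le_real]
  exact Finset.prod_nonneg fun i _ => Real.sqrt_nonneg _

lemma psd_det_nonneg {n : Type*} [Fintype n] [DecidableEq n]
    {M : Matrix n n ℂ} (hM : M.PosSemidef) : 0 ≤ M.det := by
  rw [hM.isHermitian.det_eq_prod_eigenvalues]
  have : (0:ℂ) ≤ ∏ i, (hM.1.eigenvalues i : ℂ) := by
    apply Finset.prod_nonneg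
    intro i _
    rw [Complex.zero_le_real]
    exact hM.eigenvalues_nonneg i
  exact this

/-- if `A` is a `2×2` complex matrix with `A†A ≤ I` and
`Ā = √(I − A†A)`, then `|det A| + |det Ā| ≤ 1`. -/
theorem det_measurement_bound_two (A : Matrix (Fin 2) (Fin 2) ℂ)
    (h : (1 - Aᴴ * A).PosSemidef) :
    ‖A.det‖ + ‖h.sqrt.det‖ ≤ 1 := by
  set S := h.sqrt with hSdef
  have hSS : S * S = 1 - Aᴴ * A := my_sqrt_mul_self h
  have hdS : 0 ≤ S.det := my_sqrt_det_nonneg h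
  set x := ‖A.det‖ with hx
  set y := ‖S.det‖ with hy
  have hx0 : 0 ≤ x := norm_nonneg _
  have hy0 : 0 ≤ y := norm_nonneg _
  have hdS' : S.det = (y : ℂ) := by
    rw [hy]
    exact Complex.eq_coe_norm_of_nonneg hdS
  have hdetB : (Aᴴ * A).det = ((x : ℂ))^2 := by
    rw [det_mul, det_conjTranspose,
      show star A.det = (starRingEnd ℂ) A.det from rfl, Complex.conj_mul', ← hx]
  have hkey : (y:ℂ)^2 = 1 - (Aᴴ * A).trace + (x:ℂ)^2 := by
    have h1 : (S * S).det = ((y:ℂ))^2 := by rw [det_mul, hdS']; ring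
    rw [hSS] at h1
    rw [← h1, ← hdetB]
    simp only [Matrix.det_fin_two, Matrix.trace_fin_two, Matrix.one_apply,
      Matrix.sub_apply, Matrix.mul_apply, Fin.sum_univ_two,
      Matrix.conjTranspose_apply]
    norm_num
    ring
  set t := ((Aᴴ * A).trace).re with ht
  have htr : t = 1 + x^2 - y^2 := by
    have h2 := congrArg Complex.re hkey
    simp only [← Complex.ofReal_pow, Complex.ofReal_re, Complex.add_re,
      Complex.sub_re, Complex.one_re] at h2
    linarith
  have htsum : t = (‖A 0 0‖)^2 + (‖A 0 1‖)^2
      + (‖A 1 0‖)^2 + (‖A 1 1‖)^2 := by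
    rw [ht]
    simp only [Matrix.trace_fin_two, Matrix.mul_apply, Fin.sum_univ_two,
      Matrix.conjTranspose_apply, Complex.add_re,
      Complex.star_def, ← Complex.normSq_eq_conj_mul_self, ← Complex.sq_norm,
      ← Complex.ofReal_pow, Complex.ofReal_re]
    ring
  have h2x : 2 * x ≤ t := by
    have hxle : x ≤ ‖A 0 0‖ * ‖A 1 1‖
        + ‖A 0 1‖ * ‖A 1 0‖ := by
      rw [hx, Matrix.det_fin_two]
      calc ‖A 0 0 * A 1 1 - A 0 1 * A 1 0‖
          ≤ ‖A 0 0 * A 1 1‖ + ‖A 0 1 * A 1 0‖ :=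
            norm_sub_le _ _
        _ = _ := by rw [norm_mul, norm_mul]
    nlinarith [htsum, sq_nonneg (‖A 0 0‖ - ‖A 1 1‖),
      sq_nonneg (‖A 0 1‖ - ‖A 1 0‖)]
  have hdiag : ∀ i, ((Aᴴ * A) i i).re ≤ 1 := by
    intro i
    have h0 := (Complex.le_def.mp (h.diag_nonneg (i := i))).1
    simp only [Matrix.sub_apply, Matrix.one_apply_eq, Complex.sub_re,
      Complex.one_re, Complex.zero_re] at h0
    linarith
  have ht2 : t ≤ 2 := by
    have h0 := hdiag 0
    have h1 := hdiag 1
    rw [ht]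
    simp only [Matrix.trace_fin_two, Complex.add_re]
    linarith
  nlinarith [htr, h2x, ht2, sq_nonneg (1 - x - y), mul_nonneg hx0 hy0]
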